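/- Let R be a commutative ring with identity such that the compressed zero-divisor graph Γ_E(R) has at least three vertices. Then Γ_E(R) is not a complete graph; that is, there exist two distinct vertices of Γ_E(R) that are not adjacent. -/

import Mathlib

open SimpleGraph

/-- `Zstar R` is the set of nonzero zero-divisors of the commutative ring `R`. -/
def Zstar (R : Type*) [CommRing R] : Set R :=
  {x : R | x ≠ 0 ∧ ∃ y : R, y ≠ 0 ∧ x * y = 0}

/-- `annSet R x` is the annihilator of `x`, i.e. `{y : R | x * y = 0}`. -/
def annSet (R : Type*) [CommRing R] (x : R) : Set R :=
  {y : R | x * y = 0}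

/-- Two nonzero zero-divisors are equivalent iff they have the same annihilator. -/
instance zdvSetoid (R : Type*) [CommRing R] : Setoid (Zstar R) :=
  ⟨fun a b => annSet R a.1 = annSet R b.1, ⟨fun _ => rfl, Eq.symm, Eq.trans⟩⟩

/-- The vertices of the compressed zero-divisor graph `Γ_E(R)`: equivalence
classes `[x]` of nonzero zero-divisors under equality of annihilators. -/
abbrev CZDVertex (R : Type*) [CommRing R] : Type _ :=
  Quotient (zdvSetoid R)

/-- The compressed zero-divisor graph `Γ_E(R)`: distinct classes `[x]` and `[y]`
are adjacent iff `x * y = 0` (which is independent of the chosen representatives). -/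
def CZDG (R : Type*) [CommRing R] : SimpleGraph (CZDVertex R) where
  Adj u v := u ≠ v ∧ ∃ a b : Zstar R,
    (⟦a⟧ : CZDVertex R) = u ∧ (⟦b⟧ : CZDVertex R) = v ∧ (a : R) * b = 0
  symm := by
    constructor
    rintro u v ⟨huv, a, b, ha, hb, hab⟩
    exact ⟨huv.symm, b, a, hb, ha, by rwa [mul_comm]⟩
  loopless := by
    constructor
    rintro u ⟨h, -⟩
    exact h rfl

/-- A set `W` of vertices is resolving if any two distinct vertices have
different distance to some vertex of `W`. -/
def IsResolving {V : Type*} (G : SimpleGraph V) (W : Set V) : Prop :=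
  ∀ u v : V, u ≠ v → ∃ w ∈ W, G.dist u w ≠ G.dist v w

/-- A set `W` of vertices is dominating if every vertex outside `W` is adjacent
to some vertex of `W`. -/
def IsDominating {V : Type*} (G : SimpleGraph V) (W : Set V) : Prop :=
  ∀ v : V, v ∉ W → ∃ w ∈ W, G.Adj v w

/-- The dominant metric dimension `Ddim G`: the minimum cardinality of a set of
vertices that is simultaneously resolving and dominating, with the convention
that it is `0` for a graph with exactly one vertex. -/
noncomputable def Ddim {V : Type*} (G : SimpleGraph V) : ℕ∞ :=
  if Nat.card V = 1 then 0
  else sInf {n : ℕ∞ | ∃ W : Set V, IsResolving G W ∧ IsDominating G W ∧ W.encard = n}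

section Aux
variable {R : Type*} [CommRing R]

lemma mem_annSet {x y : R} : y ∈ annSet R x ↔ x * y = 0 := Iff.rfl

lemma cmz (K : ∀ u v : CZDVertex R, u ≠ v → (CZDG R).Adj u v)
    {p q : Zstar R} (h : annSet R p.1 ≠ annSet R q.1) : (p : R) * q = 0 := by
  have hne : (⟦p⟧ : CZDVertex R) ≠ ⟦q⟧ := fun e => h (Quotient.exact e)
  obtain ⟨-, a, b, ha, hb, hab⟩ := K _ _ hne
  have h1 : annSet R a.1 = annSet R p.1 := Quotient.exact ha
  have h2 : annSet R b.1 = annSet R q.1 := Quotient.exact hb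
  have hb' : (b : R) ∈ annSet R p.1 := h1 ▸ (mem_annSet.mpr hab)
  have hp : (p : R) ∈ annSet R q.1 :=
    h2 ▸ (mem_annSet.mpr (by rw [mul_comm]; exact mem_annSet.mp hb'))
  rw [mul_comm]; exact mem_annSet.mp hp

lemma ann_eq_of_mul_ne (K : ∀ u v : CZDVertex R, u ≠ v → (CZDG R).Adj u v)
    (z q : Zstar R) (h : (z : R) * q ≠ 0) : annSet R z.1 = annSet R q.1 := by
  by_contra hne
  exact h (cmz K hne)

lemma core (K : ∀ u v : CZDVertex R, u ≠ v → (CZDG R).Adj u v)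
    (A B C : Zstar R) (x y : R)
    (hax : (A : R) * x = 0) (hbx : (B : R) * x ≠ 0) (hcx : (C : R) * x = 0)
    (hay : (A : R) * y = 0) (hcy : (C : R) * y ≠ 0)
    (hcb : (C : R) * B = 0) : False := by
  have hx0 : x ≠ 0 := fun h => hbx (by rw [h, mul_zero])
  have hy0 : y ≠ 0 := fun h => hcy (by rw [h, mul_zero])
  have hA0 : (A : R) ≠ 0 := A.2.1
  have hY : y ∈ Zstar R := ⟨hy0, A, hA0, by rw [mul_comm]; exact hay⟩
  have hyC : annSet R y = annSet R C.1 :=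
    ann_eq_of_mul_ne K ⟨y, hY⟩ C (by rw [mul_comm]; exact hcy)
  have hyB : y * (B : R) = 0 := by
    have : (B : R) ∈ annSet R y := hyC ▸ (mem_annSet.mpr hcb)
    exact mem_annSet.mp this
  have hxyB : (x + y) * (B : R) ≠ 0 := by
    intro h
    apply hbx
    have : (B : R) * x = 0 := by linear_combination h - hyB
    exact this
  have hxy0 : x + y ≠ 0 := fun h => hxyB (by rw [h, zero_mul])
  have hXY : (x + y) ∈ Zstar R :=
    ⟨hxy0, A, hA0, by linear_combination hax + hay⟩
  have hXYB : annSet R (x + y) = annSet R B.1 :=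
    ann_eq_of_mul_ne K ⟨x + y, hXY⟩ B hxyB
  have hX : x ∈ Zstar R := ⟨hx0, A, hA0, by rw [mul_comm]; exact hax⟩
  have hxB : annSet R x = annSet R B.1 :=
    ann_eq_of_mul_ne K ⟨x, hX⟩ B (by rw [mul_comm]; exact hbx)
  have hCx : (C : R) ∈ annSet R x := mem_annSet.mpr (by rw [mul_comm]; exact hcx)
  have hCxy : (C : R) ∈ annSet R (x + y) := by
    rw [hXYB]; rw [hxB] at hCx; exact hCx
  have : (x + y) * (C : R) = 0 := mem_annSet.mp hCxy
  apply hcy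
  have hxc : x * (C : R) = 0 := by rw [mul_comm]; exact hcx
  linear_combination this - hxc

lemma derive_cx (K : ∀ u v : CZDVertex R, u ≠ v → (CZDG R).Adj u v)
    (A B C : Zstar R) (x : R)
    (hax : (A : R) * x = 0) (hbx : (B : R) * x ≠ 0) (hbc : (B : R) * C = 0) :
    (C : R) * x = 0 := by
  have hx0 : x ≠ 0 := fun h => hbx (by rw [h, mul_zero])
  have hX : x ∈ Zstar R := ⟨hx0, A, A.2.1, by rw [mul_comm]; exact hax⟩
  have hxB : annSet R x = annSet R B.1 :=
    ann_eq_of_mul_ne K ⟨x, hX⟩ B (by rw [mul_comm]; exact hbx)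
  have : (C : R) ∈ annSet R x := by rw [hxB]; exact mem_annSet.mpr hbc
  rw [mul_comm]; exact mem_annSet.mp this

lemma step (K : ∀ u v : CZDVertex R, u ≠ v → (CZDG R).Adj u v)
    (A B C : Zstar R) (x : R)
    (dAC : annSet R A.1 ≠ annSet R C.1)
    (hcb : (C : R) * B = 0) (hab : (A : R) * B = 0)
    (hax : (A : R) * x = 0) (hbx : (B : R) * x ≠ 0) (hcx : (C : R) * x = 0) :
    False := by
  obtain ⟨y, hy⟩ : ∃ y, ¬((A : R) * y = 0 ↔ (C : R) * y = 0) := by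
    by_contra hco
    push_neg at hco
    exact dAC (Set.ext fun t => hco t)
  have hy' : ((A : R) * y = 0 ∧ (C : R) * y ≠ 0) ∨
      ((C : R) * y = 0 ∧ (A : R) * y ≠ 0) := by tauto
  rcases hy' with ⟨h1, h2⟩ | ⟨h1, h2⟩
  · exact core K A B C x y hax hbx hcx h1 h2 hcb
  · exact core K C B A x y hcx hbx hax h1 h2 hab

end Aux


/-- If `Γ_E(R)` has at least three vertices, then it is not a
complete graph: some two distinct vertices are not adjacent. -/
theorem stmt_15 (R : Type*) [CommRing R]
    (h : ∃ a b c : CZDVertex R, a ≠ b ∧ a ≠ c ∧ b ≠ c) :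
    ∃ u v : CZDVertex R, u ≠ v ∧ ¬(CZDG R).Adj u v := by
  by_contra hc
  push_neg at hc
  have K : ∀ u v : CZDVertex R, u ≠ v → (CZDG R).Adj u v := fun u v huv => hc u v huv
  obtain ⟨a, b, c, hab, hac, hbc⟩ := h
  obtain ⟨A, rfl⟩ := Quotient.exists_rep a
  obtain ⟨B, rfl⟩ := Quotient.exists_rep b
  obtain ⟨C, rfl⟩ := Quotient.exists_rep c
  have dAB : annSet R A.1 ≠ annSet R B.1 := fun e => hab (Quotient.sound e)
  have dAC : annSet R A.1 ≠ annSet R C.1 := fun e => hac (Quotient.sound e)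
  have dBC : annSet R B.1 ≠ annSet R C.1 := fun e => hbc (Quotient.sound e)
  have pAB : (A : R) * B = 0 := cmz K dAB
  have pAC : (A : R) * C = 0 := cmz K dAC
  have pBC : (B : R) * C = 0 := cmz K dBC
  obtain ⟨x, hx⟩ : ∃ x, ¬((A : R) * x = 0 ↔ (B : R) * x = 0) := by
    by_contra hco
    push_neg at hco
    exact dAB (Set.ext fun t => hco t)
  have hx' : ((A : R) * x = 0 ∧ (B : R) * x ≠ 0) ∨
      ((B : R) * x = 0 ∧ (A : R) * x ≠ 0) := by tauto
  rcases hx' with ⟨h1, h2⟩ | ⟨h1, h2⟩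
  · have hcx : (C : R) * x = 0 := derive_cx K A B C x h1 h2 pBC
    exact step K A B C x dAC (by rw [mul_comm]; exact pBC) pAB h1 h2 hcx
  · have hcx : (C : R) * x = 0 := derive_cx K B A C x h1 h2 pAC
    exact step K B A C x dBC (by rw [mul_comm]; exact pAC)
      (by rw [mul_comm]; exact pAB) h1 h2 hcx
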